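/- In the pushing construction: let S be a multiway cut, v ∈ r(S), S_v ⊆ S a minimal v–T separator consisting of the vertices of S reachable from v without passing through other vertices of S, and let S'_v be an important v–T separator dominating S_v (|S'_v| ≤ |S_v| and R⁺(v,G\S_v) ⊊ R⁺(v,G\S'_v)). Then S' = (S \ S_v) ∪ S'_v is again a multiway cut of (G,T). -/

import Mathlib

variable {V : Type*}

/-- A single edge step in `G \ S`: an edge of `E` with both endpoints outside `S`. -/
def DStep (E : V → V → Prop) (S : Set V) (a b : V) : Prop :=
  E a b ∧ a ∉ S ∧ b ∉ S

/-- `b` is reachable from `a` by a directed path in `G \ S`. -/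
def DReach (E : V → V → Prop) (S : Set V) (a b : V) : Prop :=
  Relation.ReflTransGen (DStep E S) a b

/-- The set of vertices reachable from the set `X` in `G \ S`. -/
def RSet (E : V → V → Prop) (S X : Set V) : Set V :=
  {v | ∃ x ∈ X, DReach E S x v}

/-- `S` is an `X`–`Y` separator: disjoint from `X ∪ Y` and destroying all `X → Y` paths. -/
def IsSep (E : V → V → Prop) (X Y S : Set V) : Prop :=
  S ∩ (X ∪ Y) = ∅ ∧ ∀ x ∈ X, ∀ y ∈ Y, ¬ DReach E S x y

/-- `S` is an inclusion-wise minimal `X`–`Y` separator. -/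
def IsMinSep (E : V → V → Prop) (X Y S : Set V) : Prop :=
  IsSep E X Y S ∧ ∀ S', S' ⊂ S → ¬ IsSep E X Y S'

/-- `S` is an important `X`–`Y` separator: a minimal separator such that no separator of at
most the same size has a strictly larger set of vertices reachable from `X`. -/
def IsImpSep (E : V → V → Prop) (X Y S : Set V) : Prop :=
  IsMinSep E X Y S ∧
    ¬ ∃ S', IsSep E X Y S' ∧ S'.ncard ≤ S.ncard ∧ RSet E S X ⊂ RSet E S' X

/-- `S` is a (vertex) multiway cut of `(G, T)`. -/
def IsMWC (E : V → V → Prop) (T S : Set V) : Prop :=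
  S ∩ T = ∅ ∧ ∀ t₁ ∈ T, ∀ t₂ ∈ T, t₁ ≠ t₂ → ¬ DReach E S t₁ t₂

/-- The forward shadow of `S` with respect to `T`: vertices outside `S ∪ T` not reachable
from `T` in `G \ S`. -/
def fShadow (E : V → V → Prop) (T S : Set V) : Set V :=
  {v | v ∉ S ∧ v ∉ T ∧ ∀ t ∈ T, ¬ DReach E S t v}

/-- The reverse shadow of `S` with respect to `T`: vertices outside `S ∪ T` that cannot
reach `T` in `G \ S`. -/
def rShadow (E : V → V → Prop) (T S : Set V) : Set V :=
  {v | v ∉ S ∧ v ∉ T ∧ ∀ t ∈ T, ¬ DReach E S v t}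

/-- The adjacency of `torso(G, C)`: an edge `(a, b)` whenever `a, b ∈ C` and `G` has a
directed `a → b` path whose internal vertices all lie outside `C`. -/
def TorsoAdj (E : V → V → Prop) (C : Set V) (a b : V) : Prop :=
  a ∈ C ∧ b ∈ C ∧ ∃ w, E a w ∧ Relation.ReflTransGen (fun x y => x ∉ C ∧ E x y) w b

private lemma dreach_end_not_mem {E : V → V → Prop} {X : Set V} {a b : V}
    (h : DReach E X a b) (ha : a ∉ X) : b ∉ X := by
  induction h with
  | refl => exact ha
  | tail _ hstep _ => exact hstep.2.2

/-- Paths avoiding `Sv \ {w}` either avoid `Sv`, or deliver an in-neighbour of `w`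
reachable in `G \ Sv`. -/
private lemma aux_min {E : V → V → Prop} {Sv : Set V} {w : V} :
    ∀ {a b : V}, Relation.ReflTransGen (DStep E (Sv \ {w})) a b → a ∉ Sv →
      (DReach E Sv a b ∨ ∃ u, DReach E Sv a u ∧ E u w) := by
  intro a b h
  induction h using Relation.ReflTransGen.head_induction_on with
  | refl => exact fun _ => Or.inl Relation.ReflTransGen.refl
  | @head x c hstep htail ih =>
    intro ha
    by_cases hc : c ∈ Sv
    · have hcw : c = w := by
        have := hstep.2.2
        simp only [Set.mem_diff, Set.mem_singleton_iff] at this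
        by_contra hne
        exact this ⟨hc, hne⟩
      exact Or.inr ⟨x, Relation.ReflTransGen.refl, hcw ▸ hstep.1⟩
    · rcases ih hc with h' | ⟨u, hu, he⟩
      · exact Or.inl (Relation.ReflTransGen.head ⟨hstep.1, ha, hc⟩ h')
      · exact Or.inr ⟨u, Relation.ReflTransGen.head ⟨hstep.1, ha, hc⟩ hu, he⟩

/-- Dichotomy for paths in `G \ S'`: either the path avoids `Sv` (hence lives in
`G \ S`), or it passes through some `w ∈ Sv \ Sv'` whose suffix lives in `G \ Sv'`. -/
private lemma aux_dich {E : V → V → Prop} {S Sv Sv' S' : Set V}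
    (hS : S ⊆ S' ∪ Sv) (hSv' : Sv' ⊆ S') :
    ∀ {a b : V}, Relation.ReflTransGen (DStep E S') a b → a ∉ Sv →
      (DReach E S a b ∨ ∃ w ∈ Sv, w ∉ Sv' ∧ DReach E Sv' w b) := by
  intro a b h
  induction h using Relation.ReflTransGen.head_induction_on with
  | refl => exact fun _ => Or.inl Relation.ReflTransGen.refl
  | @head x c hstep htail ih =>
    intro ha
    by_cases hc : c ∈ Sv
    · refine Or.inr ⟨c, hc, fun h' => hstep.2.2 (hSv' h'), ?_⟩
      exact Relation.ReflTransGen.mono (fun p q hpq =>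
        ⟨hpq.1, fun h' => hpq.2.1 (hSv' h'), fun h' => hpq.2.2 (hSv' h')⟩) _ _ htail
    · have hxS : x ∉ S := fun hx => (hS hx).elim hstep.2.1 ha
      have hcS : c ∉ S := fun hx => (hS hx).elim hstep.2.2 hc
      rcases ih hc with h' | ⟨u, hu, hu', he⟩
      · exact Or.inl (Relation.ReflTransGen.head ⟨hstep.1, hxS, hcS⟩ h')
      · exact Or.inr ⟨u, hu, hu', he⟩

/-- **pushing construction.** Replacing, inside a multiway cut `S`, the
minimal `v`–`T` separator `Sv ⊆ S` (consisting of vertices of `S` reachable from `v`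
without passing through other vertices of `S`) by an important `v`–`T` separator `Sv'`
dominating it yields again a multiway cut. -/
theorem pushing_construction (E : V → V → Prop) (T S : Set V) (v : V)
    (Sv Sv' : Set V)
    (h : IsMWC E T S) (hv : v ∈ rShadow E T S)
    (hsub : Sv ⊆ S) (hmin : IsMinSep E {v} T Sv)
    (hreach : Sv ⊆ {w | ∃ u, DReach E S v u ∧ E u w})
    (himp : IsImpSep E {v} T Sv')
    (hcard : Sv'.ncard ≤ Sv.ncard)
    (hdom : RSet E Sv {v} ⊂ RSet E Sv' {v}) :
    IsMWC E T ((S \ Sv) ∪ Sv') := by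
  obtain ⟨hST, hSsep⟩ := h
  have hSvT : Sv ∩ ({v} ∪ T) = ∅ := hmin.1.1
  have hSv'T : Sv' ∩ ({v} ∪ T) = ∅ := himp.1.1.1
  have hSv'sep : ∀ t ∈ T, ¬ DReach E Sv' v t := fun t ht =>
    himp.1.1.2 v rfl t ht
  have hvSv' : v ∉ Sv' := by
    intro hx
    have : v ∈ Sv' ∩ ({v} ∪ T) := ⟨hx, Or.inl rfl⟩
    rw [hSv'T] at this; exact this
  -- Claim A: every vertex of Sv \ Sv' is reachable from v in G \ Sv'
  have claimA : ∀ w ∈ Sv, w ∉ Sv' → DReach E Sv' v w := by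
    intro w hw hw'
    have hvSv : v ∉ Sv := by
      intro hx
      have : v ∈ Sv ∩ ({v} ∪ T) := ⟨hx, Or.inl rfl⟩
      rw [hSvT] at this; exact this
    have hssub : Sv \ {w} ⊂ Sv := by
      constructor
      · exact Set.diff_subset
      · intro hle
        have := hle hw
        simp at this
    have hnot := hmin.2 (Sv \ {w}) hssub
    rw [IsSep] at hnot
    push_neg at hnot
    rcases Classical.em ((Sv \ {w}) ∩ ({v} ∪ T) = ∅) with hcap | hcap
    · obtain ⟨x, hx, t, ht, hpath⟩ := hnot hcap
      rw [show x = v from hx] at hpath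
      rcases aux_min (E := E) hpath hvSv with h' | ⟨u, hu, he⟩
      · exact absurd h' (hmin.1.2 v rfl t ht)
      · -- u ∈ RSet E Sv {v} ⊆ RSet E Sv' {v}
        have humem : u ∈ RSet E Sv {v} := ⟨v, rfl, hu⟩
        have hu' : u ∈ RSet E Sv' {v} := hdom.1 humem
        obtain ⟨x', hx', hreach'⟩ := hu'
        rw [show x' = v from hx'] at hreach'
        have huSv' : u ∉ Sv' := dreach_end_not_mem hreach' hvSv'
        exact hreach'.tail ⟨he, huSv', hw'⟩
    · exfalso
      apply hcap
      rw [Set.eq_empty_iff_forall_notMem]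
      intro x ⟨hx1, hx2⟩
      have : x ∈ Sv ∩ ({v} ∪ T) := ⟨hx1.1, hx2⟩
      rw [hSvT] at this; exact this
  constructor
  · rw [Set.eq_empty_iff_forall_notMem]
    rintro x ⟨hx1 | hx1, hx2⟩
    · have : x ∈ S ∩ T := ⟨hx1.1, hx2⟩
      rw [hST] at this; exact this
    · have : x ∈ Sv' ∩ ({v} ∪ T) := ⟨hx1, Or.inr hx2⟩
      rw [hSv'T] at this; exact this
  · intro t₁ ht₁ t₂ ht₂ hne hpath
    have ht₁Sv : t₁ ∉ Sv := by
      intro hx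
      have : t₁ ∈ Sv ∩ ({v} ∪ T) := ⟨hx, Or.inr ht₁⟩
      rw [hSvT] at this; exact this
    have hS : S ⊆ ((S \ Sv) ∪ Sv') ∪ Sv := by
      intro x hx
      by_cases hxSv : x ∈ Sv
      · exact Or.inr hxSv
      · exact Or.inl (Or.inl ⟨hx, hxSv⟩)
    have hSv'sub : Sv' ⊆ (S \ Sv) ∪ Sv' := fun _ hx => Or.inr hx
    rcases aux_dich (S := S) hS hSv'sub hpath ht₁Sv with h' | ⟨w, hw, hw', hwr⟩
    · exact hSsep t₁ ht₁ t₂ ht₂ hne h'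
    · exact hSv'sep t₂ ht₂ ((claimA w hw hw').trans hwr)
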